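/- Let A, B ∈ S(n,ℝ), and suppose α is an eigenvalue of A, β an eigenvalue of B with q = dim(V_A(α) ∩ V_B(β)) ≥ 1. Then for every j ≥ 1 and λ > 0, the numbers γ^{±}(λ) = (−λ(α+β) ± √(λ²(α−β)² + 4j²))/2 are eigenvalues of G_j(λL) = [[-λA, jI],[jI, -λB]], each with multiplicity at least q. -/

import Mathlib

open Matrix Polynomial

section Helpers

variable {m : Type*} [Fintype m] [DecidableEq m]

private lemma my_charpoly_conj (U D V : Matrix m m ℝ) (h1 : U * V = 1) :
    (U * D * V).charpoly = D.charpoly := by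
  have key : charmatrix (U * D * V) =
      U.map C * charmatrix D * V.map C := by
    rw [charmatrix, charmatrix, Matrix.mul_sub, Matrix.sub_mul]
    congr 1
    · have hc : Commute (Matrix.scalar m (X : ℝ[X])) (V.map C) :=
        Matrix.scalar_commute _ (fun r' => Commute.all _ _) _
      calc Matrix.scalar m (X : ℝ[X])
          = (U * V).map C * Matrix.scalar m (X : ℝ[X]) := by
            rw [h1, Matrix.map_one _ (map_zero C) (map_one C), one_mul]
        _ = U.map C * (V.map C * Matrix.scalar m (X : ℝ[X])) := by
            rw [← mul_assoc, ← Matrix.map_mul]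
        _ = U.map C * (Matrix.scalar m (X : ℝ[X]) * V.map C) := by rw [hc.eq]
        _ = U.map C * Matrix.scalar m (X : ℝ[X]) * V.map C := by rw [mul_assoc]
    · simp only [RingHom.mapMatrix_apply, Matrix.map_mul]
  rw [Matrix.charpoly, key, det_mul, det_mul, Matrix.charpoly]
  have h2 : (U.map C).det * (charmatrix D).det * (V.map C).det
      = (charmatrix D).det * ((U * V).map C).det := by
    rw [Matrix.map_mul, det_mul]; ring
  rw [h2, h1, Matrix.map_one _ (map_zero C) (map_one C), det_one, mul_one]

private lemma my_charpoly_diagonal (d : m → ℝ) :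
    (diagonal d).charpoly = (Finset.univ.val.map fun i => X - C (d i)).prod := by
  have h : charmatrix (diagonal d) = diagonal fun i => X - C (d i) := by
    apply Matrix.ext; intro i k
    by_cases h : i = k
    · subst h; simp [charmatrix_apply_eq]
    · rw [charmatrix_apply_ne _ _ _ h, diagonal_apply_ne _ h, diagonal_apply_ne _ h,
        Polynomial.C_0, neg_zero]
  rw [Matrix.charpoly, h, det_diagonal, ← Finset.prod_map_val]

private lemma my_rootMult_diag (d : m → ℝ) (μ : ℝ) :
    ((diagonal d).charpoly).rootMultiplicity μ = Fintype.card {i // d i = μ} := by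
  rw [my_charpoly_diagonal, ← Polynomial.count_roots]
  have h : (Finset.univ.val.map fun i => X - C (d i)).prod
      = ((Finset.univ.val.map d).map fun a => X - C a).prod := by
    rw [Multiset.map_map]; rfl
  rw [h, Polynomial.roots_multiset_prod_X_sub_C, Multiset.count_map, Fintype.card_subtype,
    Finset.card_filter]
  simp [Finset.card, eq_comm]

private lemma my_ker_diag_finrank (w : m → ℝ) :
    Module.finrank ℝ (LinearMap.ker (diagonal w).mulVecLin) = Fintype.card {i // w i = 0} := by
  have hrn := LinearMap.finrank_range_add_finrank_ker (diagonal w).mulVecLin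
  have hr : Module.finrank ℝ (LinearMap.range (diagonal w).mulVecLin)
      = Fintype.card {i // ¬ w i = 0} := by
    rw [← Matrix.rank, Matrix.rank_diagonal]
  rw [Module.finrank_fintype_fun_eq_card] at hrn
  have hc : Fintype.card {i // ¬ w i = 0} = Fintype.card m - Fintype.card {i // w i = 0} :=
    Fintype.card_subtype_compl _
  have hle : Fintype.card {i // w i = 0} ≤ Fintype.card m := Fintype.card_subtype_le _
  omega

private lemma my_eigen_diag (d : m → ℝ) (μ : ℝ) :
    Module.finrank ℝ (Module.End.eigenspace (diagonal d).mulVecLin μ)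
      = Fintype.card {i // d i = μ} := by
  have h : Module.End.eigenspace (diagonal d).mulVecLin μ
      = LinearMap.ker (diagonal (fun i => d i - μ)).mulVecLin := by
    ext x
    rw [Module.End.mem_eigenspace_iff, LinearMap.mem_ker]
    simp only [mulVecLin_apply]
    constructor
    · intro hx
      funext i
      have h1 := congrFun hx i
      rw [Matrix.mulVec_diagonal] at h1
      simp only [Pi.smul_apply, smul_eq_mul] at h1
      rw [Matrix.mulVec_diagonal]
      simp only [Pi.zero_apply]
      rw [sub_mul, h1, sub_self]
    · intro hx
      funext i
      have h1 := congrFun hx i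
      rw [Matrix.mulVec_diagonal] at h1
      simp only [Pi.zero_apply] at h1
      rw [Matrix.mulVec_diagonal]
      simp only [Pi.smul_apply, smul_eq_mul]
      rw [sub_mul] at h1
      exact sub_eq_zero.mp h1
  rw [h, my_ker_diag_finrank]
  exact Fintype.card_congr (Equiv.subtypeEquivRight fun i => sub_eq_zero)

private lemma my_herm_finrank_le (M : Matrix m m ℝ) (hM : M.IsHermitian) (μ : ℝ) :
    Module.finrank ℝ (Module.End.eigenspace M.mulVecLin μ)
      ≤ (M.charpoly).rootMultiplicity μ := by
  set U : Matrix m m ℝ := (hM.eigenvectorUnitary : Matrix m m ℝ) with hU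
  set d : m → ℝ := hM.eigenvalues with hd
  have hmem := hM.eigenvectorUnitary.2
  rw [Unitary.mem_iff] at hmem
  obtain ⟨hVU, hUV⟩ := hmem
  have hspec : M = U * diagonal d * star U := by simpa using hM.spectral_theorem
  have hcp : M.charpoly = (diagonal d).charpoly := by
    conv_lhs => rw [hspec]
    exact my_charpoly_conj U _ (star U) hUV
  rw [hcp, my_rootMult_diag, ← my_eigen_diag d μ]
  set g : (m → ℝ) →ₗ[ℝ] (m → ℝ) := (star U).mulVecLin with hg
  have hginj : Function.Injective g := by
    apply Function.LeftInverse.injective (g := U.mulVecLin)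
    intro x
    simp only [hg, mulVecLin_apply, mulVec_mulVec, hU, hUV, one_mulVec]
  have hmap : (Module.End.eigenspace M.mulVecLin μ).map g
      ≤ Module.End.eigenspace (diagonal d).mulVecLin μ := by
    rintro _ ⟨v, hv, rfl⟩
    rw [SetLike.mem_coe] at hv
    rw [Module.End.mem_eigenspace_iff] at hv ⊢
    simp only [mulVecLin_apply] at hv ⊢
    simp only [hg, mulVecLin_apply, mulVec_mulVec]
    have hcomm : diagonal d * star U = star U * M := by
      rw [hspec, ← mul_assoc, ← mul_assoc, hVU, one_mul]
    rw [hcomm, ← mulVec_mulVec, hv, mulVec_smul]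
  calc Module.finrank ℝ (Module.End.eigenspace M.mulVecLin μ)
      = Module.finrank ℝ ((Module.End.eigenspace M.mulVecLin μ).map g) :=
        (LinearEquiv.finrank_eq (Submodule.equivMapOfInjective g hginj _))
    _ ≤ Module.finrank ℝ (Module.End.eigenspace (diagonal d).mulVecLin μ) :=
        Submodule.finrank_mono hmap

end Helpers

/-- `G_j(C,D) = [[-C, jI],[jI, -D]]`. -/
noncomputable def Gmat (n j : ℕ) (C D : Matrix (Fin n) (Fin n) ℝ) :
    Matrix (Fin n ⊕ Fin n) (Fin n ⊕ Fin n) ℝ :=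
  fromBlocks (-C) ((j : ℝ) • 1) ((j : ℝ) • 1) (-D)

private lemma Gmat_isHermitian (n j : ℕ) {A B : Matrix (Fin n) (Fin n) ℝ}
    (hA : A.IsSymm) (hB : B.IsSymm) (l : ℝ) :
    (Gmat n j (l • A) (l • B)).IsHermitian := by
  rw [Matrix.IsHermitian, Gmat, fromBlocks_conjTranspose]
  have h1 : (-(l • A))ᴴ = -(l • A) := by
    ext i k
    simp [conjTranspose_apply, hA.apply k i]
  have h2 : (-(l • B))ᴴ = -(l • B) := by
    ext i k
    simp [conjTranspose_apply, hB.apply k i]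
  have h3 : (((j : ℝ)) • (1 : Matrix (Fin n) (Fin n) ℝ))ᴴ = ((j : ℝ)) • 1 := by
    ext i k
    by_cases h : i = k <;> simp [conjTranspose_apply, Matrix.one_apply, h, eq_comm]
  rw [h1, h2, h3]

private lemma key_bound (n : ℕ) (A B : Matrix (Fin n) (Fin n) ℝ) (hA : A.IsSymm) (hB : B.IsSymm)
    (α β : ℝ) (q : ℕ)
    (hq : q = Module.finrank ℝ
      (Module.End.eigenspace A.mulVecLin α ⊓ Module.End.eigenspace B.mulVecLin β :
        Submodule ℝ (Fin n → ℝ)))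
    (j : ℕ) (hj : 1 ≤ j) (l : ℝ) (γ : ℝ)
    (hkey : (γ + l * α) * (γ + l * β) = (j : ℝ) ^ 2) :
    q ≤ Polynomial.rootMultiplicity γ (Gmat n j (l • A) (l • B)).charpoly := by
  have hjne : (j : ℝ) ≠ 0 := by
    exact_mod_cast Nat.one_le_iff_ne_zero.mp hj
  set c : ℝ := (j : ℝ) with hc
  set d : ℝ := γ + l * α with hd
  set G : Matrix (Fin n ⊕ Fin n) (Fin n ⊕ Fin n) ℝ := Gmat n j (l • A) (l • B) with hG
  set E : Submodule ℝ (Fin n → ℝ) :=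
    (Module.End.eigenspace A.mulVecLin α ⊓ Module.End.eigenspace B.mulVecLin β) with hE
  -- the linear map v ↦ (c v, d v)
  set Φ : (Fin n → ℝ) →ₗ[ℝ] (Fin n ⊕ Fin n → ℝ) :=
    { toFun := fun v => Sum.elim (c • v) (d • v)
      map_add' := by
        intro x y; funext i; cases i <;> simp [smul_add]
      map_smul' := by
        intro r x; funext i; cases i <;> simp [smul_smul, mul_comm, mul_left_comm] } with hΦ
  have hΦapp : ∀ v, Φ v = Sum.elim (c • v) (d • v) := fun v => rfl
  have hΦE : ∀ v ∈ E, Φ v ∈ Module.End.eigenspace G.mulVecLin γ := by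
    intro v hv
    obtain ⟨hvA, hvB⟩ := Submodule.mem_inf.mp hv
    rw [Module.End.mem_eigenspace_iff] at hvA hvB ⊢
    simp only [mulVecLin_apply] at hvA hvB ⊢
    rw [hΦapp, hG, Gmat, fromBlocks_mulVec, Sum.elim_comp_inl, Sum.elim_comp_inr]
    have e1 : -(l • A) *ᵥ (c • v) + ((j : ℝ) • (1 : Matrix (Fin n) (Fin n) ℝ)) *ᵥ (d • v)
        = γ • (c • v) := by
      rw [neg_mulVec, smul_mulVec, smul_mulVec, mulVec_smul, mulVec_smul,
        one_mulVec, hvA]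
      match_scalars
      ring
    have e2 : ((j : ℝ) • (1 : Matrix (Fin n) (Fin n) ℝ)) *ᵥ (c • v) + -(l • B) *ᵥ (d • v)
        = γ • (d • v) := by
      rw [neg_mulVec, smul_mulVec, smul_mulVec, mulVec_smul, mulVec_smul,
        one_mulVec, hvB]
      match_scalars
      linear_combination -hkey
    rw [e1, e2]
    funext i; cases i <;> simp
  -- the injection of E into the eigenspace
  set f : E →ₗ[ℝ] (Module.End.eigenspace G.mulVecLin γ) :=
    (Φ.comp E.subtype).codRestrict _ (fun x => hΦE x x.2) with hf
  have hfinj : Function.Injective f := by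
    intro x y hxy
    apply Subtype.ext
    have h1 : Φ (x : Fin n → ℝ) = Φ (y : Fin n → ℝ) := congrArg Subtype.val hxy
    rw [hΦapp, hΦapp] at h1
    have h2 : c • (x : Fin n → ℝ) = c • (y : Fin n → ℝ) := by
      funext i
      exact congrFun h1 (Sum.inl i)
    exact smul_right_injective _ hjne h2
  have hle : q ≤ Module.finrank ℝ (Module.End.eigenspace G.mulVecLin γ) := by
    rw [hq]
    exact LinearMap.finrank_le_finrank_of_injective hfinj
  exact hle.trans (my_herm_finrank_le G (Gmat_isHermitian n j hA hB l) γ)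

theorem stmt15 (n : ℕ) (A B : Matrix (Fin n) (Fin n) ℝ) (hA : A.IsSymm) (hB : B.IsSymm)
    (α β : ℝ) (q : ℕ)
    (hq : q = Module.finrank ℝ
      (Module.End.eigenspace A.mulVecLin α ⊓ Module.End.eigenspace B.mulVecLin β : Submodule ℝ (Fin n → ℝ)))
    (hq1 : 1 ≤ q) (j : ℕ) (hj : 1 ≤ j) (l : ℝ) (hl : 0 < l) :
    q ≤ Polynomial.rootMultiplicity
        ((-l * (α + β) + Real.sqrt (l ^ 2 * (α - β) ^ 2 + 4 * (j : ℝ) ^ 2)) / 2)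
        (Gmat n j (l • A) (l • B)).charpoly ∧
    q ≤ Polynomial.rootMultiplicity
        ((-l * (α + β) - Real.sqrt (l ^ 2 * (α - β) ^ 2 + 4 * (j : ℝ) ^ 2)) / 2)
        (Gmat n j (l • A) (l • B)).charpoly := by
  have hs : (Real.sqrt (l ^ 2 * (α - β) ^ 2 + 4 * (j : ℝ) ^ 2)) ^ 2
      = l ^ 2 * (α - β) ^ 2 + 4 * (j : ℝ) ^ 2 := Real.sq_sqrt (by positivity)
  set s : ℝ := Real.sqrt (l ^ 2 * (α - β) ^ 2 + 4 * (j : ℝ) ^ 2) with hsdef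
  constructor
  · apply key_bound n A B hA hB α β q hq j hj l
    linear_combination hs / 4
  · apply key_bound n A B hA hB α β q hq j hj l
    linear_combination hs / 4
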